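/- Lemma 2.3 (with Δ ≥ 0): let X = Γ_α Z and X' = Γ_β Z' be independent, where Γ_α is a real p×m matrix, Γ_β is a real p×m' matrix, Σ_α = Γ_α Γ_αᵀ and Σ_β = Γ_β Γ_βᵀ. Then for any symmetric positive semidefinite real p×p matrix W, E[(Xᵀ W X')⁴] ≤ (3 + Δ) (tr(WΣ_α W Σ_β))² + (3 + Δ)(2 + Δ) tr((WΣ_α W Σ_β)²). -/

import Mathlib

open MeasureTheory ProbabilityTheory Matrix
open scoped ENNReal

section AuxSumLemmas

variable {α β γ δ : Type*} [Fintype α] [Fintype β] [Fintype γ] [Fintype δ]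

lemma auxCommd1 (f : α → β → γ → δ → ℝ) :
    (∑ a, ∑ b, ∑ c, ∑ d, f a b c d) = ∑ a, ∑ c, ∑ b, ∑ d, f a b c d :=
  Finset.sum_congr rfl fun _ _ => Finset.sum_comm

lemma auxCommd2 (f : α → β → γ → δ → ℝ) :
    (∑ a, ∑ b, ∑ c, ∑ d, f a b c d) = ∑ a, ∑ b, ∑ d, ∑ c, f a b c d :=
  Finset.sum_congr rfl fun _ _ => Finset.sum_congr rfl fun _ _ => Finset.sum_comm

lemma auxSumCongr4 {f g : α → β → γ → δ → ℝ} (h : ∀ a b c d, f a b c d = g a b c d) :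
    (∑ a, ∑ b, ∑ c, ∑ d, f a b c d) = ∑ a, ∑ b, ∑ c, ∑ d, g a b c d :=
  Finset.sum_congr rfl fun a _ => Finset.sum_congr rfl fun b _ =>
    Finset.sum_congr rfl fun c _ => Finset.sum_congr rfl fun d _ => h a b c d

lemma auxSumCongr3 {f g : α → β → γ → ℝ} (h : ∀ a b c, f a b c = g a b c) :
    (∑ a, ∑ b, ∑ c, f a b c) = ∑ a, ∑ b, ∑ c, g a b c :=
  Finset.sum_congr rfl fun a _ => Finset.sum_congr rfl fun b _ =>
    Finset.sum_congr rfl fun c _ => h a b c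

lemma auxSumCongr2 {f g : α → β → ℝ} (h : ∀ a b, f a b = g a b) :
    (∑ a, ∑ b, f a b) = ∑ a, ∑ b, g a b :=
  Finset.sum_congr rfl fun a _ => Finset.sum_congr rfl fun b _ => h a b

end AuxSumLemmas

section AuxInj

lemma auxInj2 {α : Type*} (x y : α) (hxy : x ≠ y) : Function.Injective ![x, y] := by
  intro i j hij; fin_cases i <;> fin_cases j <;> simp_all

lemma auxInj3 {α : Type*} (x y z : α) (h1 : x ≠ y) (h2 : x ≠ z) (h3 : y ≠ z) :
    Function.Injective ![x, y, z] := by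
  intro i j hij; fin_cases i <;> fin_cases j <;> simp_all

lemma auxInj4 {α : Type*} (x y z w : α) (h1 : x ≠ y) (h2 : x ≠ z) (h3 : x ≠ w)
    (h4 : y ≠ z) (h5 : y ≠ w) (h6 : z ≠ w) : Function.Injective ![x, y, z, w] := by
  intro i j hij; fin_cases i <;> fin_cases j <;> simp_all

end AuxInj

/-- Fourth mixed moment of the components of `Z`. -/
lemma auxMoment4 {Ω : Type*} [MeasurableSpace Ω] (P : Measure Ω) [IsProbabilityMeasure P]
    {m : ℕ} (Δ : ℝ) (Z : Ω → Fin m → ℝ)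
    (hmean : ∀ s, (∫ ω, Z ω s ∂P) = 0)
    (hvar : ∀ s, (∫ ω, (Z ω s) ^ 2 ∂P) = 1)
    (hkurt : ∀ s, (∫ ω, (Z ω s) ^ 4 ∂P) = 3 + Δ)
    (hfac : ∀ (r : ℕ) (s : Fin r → Fin m), Function.Injective s →
        ∀ ς : Fin r → ℕ, (∀ t, 1 ≤ ς t) → (∑ t, ς t) ≤ 4 →
        (∫ ω, ∏ t, (Z ω (s t)) ^ (ς t) ∂P) = ∏ t, ∫ ω, (Z ω (s t)) ^ (ς t) ∂P)
    (a b c d : Fin m) :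
    (∫ ω, Z ω a * Z ω b * Z ω c * Z ω d ∂P) =
      (if a = b then (1:ℝ) else 0) * (if c = d then 1 else 0)
      + (if a = c then 1 else 0) * (if b = d then 1 else 0)
      + (if a = d then 1 else 0) * (if b = c then 1 else 0)
      + Δ * ((if a = b then 1 else 0) * ((if a = c then 1 else 0) * (if a = d then 1 else 0))) := by
  have h31 : ∀ x y, x ≠ y → (∫ ω, Z ω x ^ 3 * Z ω y ∂P) = 0 := by
    intro x y hxy
    have := hfac 2 ![x, y] (auxInj2 x y hxy) ![3, 1] (by intro t; fin_cases t <;> simp)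
      (by simp [Fin.sum_univ_two])
    simpa [Fin.prod_univ_two, hmean y] using this
  have h22 : ∀ x y, x ≠ y → (∫ ω, Z ω x ^ 2 * Z ω y ^ 2 ∂P) = 1 := by
    intro x y hxy
    have := hfac 2 ![x, y] (auxInj2 x y hxy) ![2, 2] (by intro t; fin_cases t <;> simp)
      (by simp [Fin.sum_univ_two])
    simpa [Fin.prod_univ_two, hvar x, hvar y] using this
  have h211 : ∀ x y z, x ≠ y → x ≠ z → y ≠ z →
      (∫ ω, Z ω x ^ 2 * Z ω y * Z ω z ∂P) = 0 := by
    intro x y z h1 h2 h3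
    have := hfac 3 ![x, y, z] (auxInj3 x y z h1 h2 h3) ![2, 1, 1]
      (by intro t; fin_cases t <;> simp) (by simp [Fin.sum_univ_three])
    simpa [Fin.prod_univ_three, hmean y, mul_assoc] using this
  have h1111 : ∀ x y z w, x ≠ y → x ≠ z → x ≠ w → y ≠ z → y ≠ w → z ≠ w →
      (∫ ω, Z ω x * Z ω y * Z ω z * Z ω w ∂P) = 0 := by
    intro x y z w h1 h2 h3 h4 h5 h6
    have := hfac 4 ![x, y, z, w] (auxInj4 x y z w h1 h2 h3 h4 h5 h6) ![1, 1, 1, 1]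
      (by intro t; fin_cases t <;> simp) (by simp [Fin.sum_univ_four])
    simpa [Fin.prod_univ_four, hmean x, mul_assoc] using this
  by_cases hab : a = b
  · subst hab
    by_cases hac : a = c
    · subst hac
      by_cases had : a = d
      · subst had
        rw [show (∫ ω, Z ω a * Z ω a * Z ω a * Z ω a ∂P) = ∫ ω, Z ω a ^ 4 ∂P by
          congr 1; funext ω; ring, hkurt]
        simp
        norm_num
      · rw [show (∫ ω, Z ω a * Z ω a * Z ω a * Z ω d ∂P) = ∫ ω, Z ω a ^ 3 * Z ω d ∂P by
          congr 1; funext ω; ring, h31 a d had]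
        simp [had]
    · by_cases had : a = d
      · subst had
        rw [show (∫ ω, Z ω a * Z ω a * Z ω c * Z ω a ∂P) = ∫ ω, Z ω a ^ 3 * Z ω c ∂P by
          congr 1; funext ω; ring, h31 a c hac]
        simp [hac, Ne.symm hac]
      · by_cases hcd : c = d
        · subst hcd
          rw [show (∫ ω, Z ω a * Z ω a * Z ω c * Z ω c ∂P) = ∫ ω, Z ω a ^ 2 * Z ω c ^ 2 ∂P by
            congr 1; funext ω; ring, h22 a c hac]
          simp [hac]
        · rw [show (∫ ω, Z ω a * Z ω a * Z ω c * Z ω d ∂P) = ∫ ω, Z ω a ^ 2 * Z ω c * Z ω d ∂P by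
            congr 1; funext ω; ring, h211 a c d hac had hcd]
          simp [hac, had, hcd]
  · by_cases hac : a = c
    · subst hac
      by_cases had : a = d
      · subst had
        rw [show (∫ ω, Z ω a * Z ω b * Z ω a * Z ω a ∂P) = ∫ ω, Z ω a ^ 3 * Z ω b ∂P by
          congr 1; funext ω; ring, h31 a b hab]
        simp [hab, Ne.symm hab]
      · by_cases hbd : b = d
        · subst hbd
          rw [show (∫ ω, Z ω a * Z ω b * Z ω a * Z ω b ∂P) = ∫ ω, Z ω a ^ 2 * Z ω b ^ 2 ∂P by
            congr 1; funext ω; ring, h22 a b hab]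
          simp [hab, Ne.symm hab]
        · rw [show (∫ ω, Z ω a * Z ω b * Z ω a * Z ω d ∂P) = ∫ ω, Z ω a ^ 2 * Z ω b * Z ω d ∂P by
            congr 1; funext ω; ring, h211 a b d hab had hbd]
          simp [hab, had, hbd, Ne.symm hab, Ne.symm had]
    · by_cases had : a = d
      · subst had
        by_cases hbc : b = c
        · subst hbc
          rw [show (∫ ω, Z ω a * Z ω b * Z ω b * Z ω a ∂P) = ∫ ω, Z ω a ^ 2 * Z ω b ^ 2 ∂P by
            congr 1; funext ω; ring, h22 a b hab]
          simp [hab, Ne.symm hab]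
        · rw [show (∫ ω, Z ω a * Z ω b * Z ω c * Z ω a ∂P) = ∫ ω, Z ω a ^ 2 * Z ω b * Z ω c ∂P by
            congr 1; funext ω; ring, h211 a b c hab hac hbc]
          simp [hab, hac, hbc, Ne.symm hab, Ne.symm hac]
      · by_cases hbc : b = c
        · subst hbc
          by_cases hbd : b = d
          · subst hbd
            rw [show (∫ ω, Z ω a * Z ω b * Z ω b * Z ω b ∂P) = ∫ ω, Z ω b ^ 3 * Z ω a ∂P by
              congr 1; funext ω; ring, h31 b a (Ne.symm hab)]
            simp [hab, Ne.symm hab]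
          · rw [show (∫ ω, Z ω a * Z ω b * Z ω b * Z ω d ∂P) = ∫ ω, Z ω b ^ 2 * Z ω a * Z ω d ∂P
              by congr 1; funext ω; ring, h211 b a d (Ne.symm hab) hbd had]
            simp [hab, had, hbd, Ne.symm hab, Ne.symm had, Ne.symm hbd]
        · by_cases hbd : b = d
          · subst hbd
            rw [show (∫ ω, Z ω a * Z ω b * Z ω c * Z ω b ∂P) = ∫ ω, Z ω b ^ 2 * Z ω a * Z ω c ∂P
              by congr 1; funext ω; ring, h211 b a c (Ne.symm hab) hbc hac]
            simp [hab, hac, hbc, Ne.symm hab, Ne.symm hac, Ne.symm hbc]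
          · by_cases hcd : c = d
            · subst hcd
              rw [show (∫ ω, Z ω a * Z ω b * Z ω c * Z ω c ∂P) =
                  ∫ ω, Z ω c ^ 2 * Z ω a * Z ω b ∂P by congr 1; funext ω; ring,
                h211 c a b (Ne.symm hac) (Ne.symm hbc) hab]
              simp [hab, hac, hbc, Ne.symm hab, Ne.symm hac, Ne.symm hbc]
            · rw [h1111 a b c d hab hac had hbc hbd hcd]
              simp [hab, hac, had, hbc, hbd, hcd]

section AuxMaster

variable {m m' : ℕ}

lemma auxT2exp (A : Matrix (Fin m) (Fin m') ℝ) :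
    (∑ s, ∑ t, A s t ^ 2) ^ 2 = ∑ s, ∑ t, ∑ s', ∑ t', A s t ^ 2 * A s' t' ^ 2 := by
  rw [sq, Finset.sum_mul_sum]
  exact (auxSumCongr2 fun s s' => Finset.sum_mul_sum _ _ _ _).trans (auxCommd1 _)

lemma auxE4exp (A : Matrix (Fin m) (Fin m') ℝ) :
    (∑ s, ∑ s', (∑ t, A s t * A s' t) ^ 2)
      = ∑ s, ∑ s', ∑ t, ∑ t', A s t * A s' t * (A s t' * A s' t') :=
  auxSumCongr2 fun s s' => by rw [sq, Finset.sum_mul_sum]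

lemma auxDnexp (A : Matrix (Fin m) (Fin m') ℝ) :
    (∑ s, (∑ t, A s t ^ 2) ^ 2) = ∑ s, ∑ t, ∑ t', A s t ^ 2 * A s t' ^ 2 :=
  Finset.sum_congr rfl fun s _ => by rw [sq, Finset.sum_mul_sum]

lemma auxDmexp (A : Matrix (Fin m) (Fin m') ℝ) :
    (∑ t, (∑ s, A s t ^ 2) ^ 2) = ∑ t : Fin m', ∑ s : Fin m, ∑ s' : Fin m, A s t ^ 2 * A s' t ^ 2 :=
  Finset.sum_congr rfl fun t _ => by rw [sq, Finset.sum_mul_sum]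

set_option maxHeartbeats 1000000 in
lemma auxMasterSum (Δ : ℝ) (A : Matrix (Fin m) (Fin m') ℝ) :
    (∑ s1, ∑ t1, ∑ s2, ∑ t2, ∑ s3, ∑ t3, ∑ s4, ∑ t4,
      A s1 t1 * A s2 t2 * A s3 t3 * A s4 t4 *
        (((if s1 = s2 then (1:ℝ) else 0) * (if s3 = s4 then 1 else 0)
          + (if s1 = s3 then 1 else 0) * (if s2 = s4 then 1 else 0)
          + (if s1 = s4 then 1 else 0) * (if s2 = s3 then 1 else 0)
          + Δ * ((if s1 = s2 then 1 else 0) * ((if s1 = s3 then 1 else 0) * (if s1 = s4 then 1 else 0)))) *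
         ((if t1 = t2 then (1:ℝ) else 0) * (if t3 = t4 then 1 else 0)
          + (if t1 = t3 then 1 else 0) * (if t2 = t4 then 1 else 0)
          + (if t1 = t4 then 1 else 0) * (if t2 = t3 then 1 else 0)
          + Δ * ((if t1 = t2 then 1 else 0) * ((if t1 = t3 then 1 else 0) * (if t1 = t4 then 1 else 0))))))
      = 3 * (∑ s, ∑ t, A s t ^ 2) ^ 2
        + 6 * (∑ s, ∑ s', (∑ t, A s t * A s' t) ^ 2)
        + 3 * Δ * (∑ s, (∑ t, A s t ^ 2) ^ 2)
        + 3 * Δ * (∑ t, (∑ s, A s t ^ 2) ^ 2)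
        + Δ * Δ * (∑ s, ∑ t, A s t ^ 4) := by
  have hT2 : ∀ (F : Fin m → Fin m' → Fin m → Fin m' → ℝ),
      (∀ a b c d, F a b c d = A a b ^ 2 * A c d ^ 2) →
      (∑ s, ∑ t, ∑ s', ∑ t', F s t s' t') = (∑ s, ∑ t, A s t ^ 2) ^ 2 :=
    fun F hF => (auxSumCongr4 hF).trans (auxT2exp A).symm
  have hE4 : ∀ (F : Fin m → Fin m' → Fin m → Fin m' → ℝ),
      (∀ a b c d, F a b c d = A a b * A c b * (A a d * A c d)) →
      (∑ s, ∑ t, ∑ s', ∑ t', F s t s' t') = ∑ s, ∑ s', (∑ t, A s t * A s' t) ^ 2 :=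
    fun F hF => ((auxSumCongr4 hF).trans (auxCommd1 _).symm).trans (auxE4exp A).symm
  have hE4' : ∀ (F : Fin m → Fin m' → Fin m' → Fin m → ℝ),
      (∀ a b d c, F a b d c = A a b * A c b * (A a d * A c d)) →
      (∑ s, ∑ t, ∑ t', ∑ s', F s t t' s') = ∑ s, ∑ s', (∑ t, A s t * A s' t) ^ 2 := by
    intro F hF
    rw [auxCommd2]
    exact ((auxSumCongr4 fun a b c d => hF a b d c).trans (auxCommd1 _).symm).trans
      (auxE4exp A).symm
  have hDn : ∀ (F : Fin m → Fin m' → Fin m' → ℝ),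
      (∀ a b d, F a b d = A a b ^ 2 * A a d ^ 2 * Δ) →
      (∑ s, ∑ t, ∑ t', F s t t') = (∑ s, (∑ t, A s t ^ 2) ^ 2) * Δ := by
    intro F hF
    rw [auxSumCongr3 hF, auxDnexp]
    simp only [← Finset.sum_mul]
  have hDm : ∀ (F : Fin m → Fin m' → Fin m → ℝ),
      (∀ a b c, F a b c = A a b ^ 2 * A c b ^ 2 * Δ) →
      (∑ s, ∑ t, ∑ s', F s t s') = (∑ t, (∑ s, A s t ^ 2) ^ 2) * Δ := by
    intro F hF
    rw [auxSumCongr3 hF]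
    rw [show (∑ a : Fin m, ∑ b : Fin m', ∑ c : Fin m, A a b ^ 2 * A c b ^ 2 * Δ)
        = ∑ b : Fin m', ∑ a : Fin m, ∑ c : Fin m, A a b ^ 2 * A c b ^ 2 * Δ from Finset.sum_comm]
    rw [auxDmexp]
    simp only [← Finset.sum_mul]
  simp only [add_mul, mul_add, ite_mul, mul_ite, mul_one, mul_zero, zero_mul, one_mul,
    Finset.sum_add_distrib, Finset.sum_ite_irrel, Finset.sum_const_zero, Finset.sum_ite_eq,
    Finset.sum_ite_eq', Finset.mem_univ, if_true]
  rw [hT2 (fun a b c d => A a b * A a b * A c d * A c d) (fun a b c d => by ring),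
    hE4 (fun a b c d => A a b * A c b * A a d * A c d) (fun a b c d => by ring),
    hE4 (fun a b c d => A a b * A c b * A c d * A a d) (fun a b c d => by ring),
    hDn (fun a b d => A a b * A a b * A a d * A a d * Δ) (fun a b d => by ring),
    hE4' (fun a b d c => A a b * A a d * A c b * A c d) (fun a b d c => by ring),
    hT2 (fun a b c d => A a b * A c d * A a b * A c d) (fun a b c d => by ring),
    hE4 (fun a b c d => A a b * A c d * A c b * A a d) (fun a b c d => by ring),
    hDn (fun a b d => A a b * A a d * A a b * A a d * Δ) (fun a b d => by ring),
    hE4' (fun a b d c => A a b * A a d * A c d * A c b) (fun a b d c => by ring),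
    hE4 (fun a b c d => A a b * A c d * A a d * A c b) (fun a b c d => by ring),
    hT2 (fun a b c d => A a b * A c d * A c d * A a b) (fun a b c d => by ring),
    hDn (fun a b d => A a b * A a d * A a d * A a b * Δ) (fun a b d => by ring),
    hDm (fun a b c => A a b * A a b * A c b * A c b * Δ) (fun a b c => by ring),
    hDm (fun a b c => A a b * A c b * A a b * A c b * Δ) (fun a b c => by ring),
    hDm (fun a b c => A a b * A c b * A c b * A a b * Δ) (fun a b c => by ring)]
  rw [show (∑ a : Fin m, ∑ b : Fin m', A a b * A a b * A a b * A a b * (Δ * Δ))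
      = ∑ a : Fin m, ∑ b : Fin m', A a b ^ 4 * (Δ * Δ) from auxSumCongr2 fun a b => by ring]
  simp only [← Finset.sum_mul]
  ring

-- inequalities
lemma auxE4_le_T2 (A : Matrix (Fin m) (Fin m') ℝ) :
    (∑ s, ∑ s', (∑ t, A s t * A s' t) ^ 2) ≤ (∑ s, ∑ t, A s t ^ 2) ^ 2 := by
  have step : ∀ s s' : Fin m, (∑ t, A s t * A s' t) ^ 2 ≤ (∑ t, A s t ^ 2) * (∑ t, A s' t ^ 2) :=
    fun s s' => Finset.sum_mul_sq_le_sq_mul_sq _ _ _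
  calc (∑ s, ∑ s', (∑ t, A s t * A s' t) ^ 2)
      ≤ ∑ s, ∑ s', (∑ t, A s t ^ 2) * (∑ t, A s' t ^ 2) :=
        Finset.sum_le_sum fun s _ => Finset.sum_le_sum fun s' _ => step s s'
    _ = (∑ s, ∑ t, A s t ^ 2) * (∑ s', ∑ t, A s' t ^ 2) := (Finset.sum_mul_sum _ _ _ _).symm
    _ = (∑ s, ∑ t, A s t ^ 2) ^ 2 := (sq _).symm

lemma auxDn_le_E4 (A : Matrix (Fin m) (Fin m') ℝ) :
    (∑ s, (∑ t, A s t ^ 2) ^ 2) ≤ ∑ s, ∑ s', (∑ t, A s t * A s' t) ^ 2 := by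
  refine Finset.sum_le_sum fun s _ => ?_
  have h : (∑ t, A s t ^ 2) ^ 2 = (∑ t, A s t * A s t) ^ 2 := by
    congr 1; exact Finset.sum_congr rfl fun t _ => sq (A s t)
  rw [h]
  exact Finset.single_le_sum (f := fun s' => (∑ t, A s t * A s' t) ^ 2)
    (fun s' _ => sq_nonneg _) (Finset.mem_univ s)

lemma auxF4_le_Dn (A : Matrix (Fin m) (Fin m') ℝ) :
    (∑ s, ∑ t, A s t ^ 4) ≤ ∑ s, (∑ t, A s t ^ 2) ^ 2 := by
  refine Finset.sum_le_sum fun s _ => ?_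
  have h := Finset.sum_sq_le_sq_sum_of_nonneg (s := Finset.univ)
    (f := fun t => A s t ^ 2) (fun t _ => sq_nonneg _)
  calc (∑ t, A s t ^ 4) = ∑ t, (A s t ^ 2) ^ 2 := Finset.sum_congr rfl fun t _ => by ring
    _ ≤ (∑ t, A s t ^ 2) ^ 2 := h

lemma auxDm_le_E4 (A : Matrix (Fin m) (Fin m') ℝ) :
    (∑ t, (∑ s, A s t ^ 2) ^ 2) ≤ ∑ s, ∑ s', (∑ t, A s t * A s' t) ^ 2 := by
  have h1 : (∑ t, (∑ s, A s t ^ 2) ^ 2) ≤ ∑ t, ∑ t', (∑ s, A s t * A s t') ^ 2 := by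
    refine Finset.sum_le_sum fun t _ => ?_
    have h : (∑ s, A s t ^ 2) ^ 2 = (∑ s, A s t * A s t) ^ 2 := by
      congr 1; exact Finset.sum_congr rfl fun s _ => sq (A s t)
    rw [h]
    exact Finset.single_le_sum (f := fun t' => (∑ s, A s t * A s t') ^ 2)
      (fun t' _ => sq_nonneg _) (Finset.mem_univ t)
  refine h1.trans (le_of_eq ?_)
  calc (∑ t, ∑ t', (∑ s, A s t * A s t') ^ 2)
      = ∑ t, ∑ t', ∑ s, ∑ s', (A s t * A s t') * (A s' t * A s' t') :=
        auxSumCongr2 fun t t' => by rw [sq, Finset.sum_mul_sum]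
    _ = ∑ t, ∑ s, ∑ t', ∑ s', (A s t * A s t') * (A s' t * A s' t') := auxCommd1 _
    _ = ∑ s, ∑ t, ∑ t', ∑ s', (A s t * A s t') * (A s' t * A s' t') := Finset.sum_comm
    _ = ∑ s, ∑ t, ∑ s', ∑ t', (A s t * A s t') * (A s' t * A s' t') := auxCommd2 _
    _ = ∑ s, ∑ s', ∑ t, ∑ t', (A s t * A s t') * (A s' t * A s' t') := auxCommd1 _
    _ = ∑ s, ∑ s', ∑ t, ∑ t', (A s t * A s' t) * (A s t' * A s' t') :=
        auxSumCongr4 fun s s' t t' => by ring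
    _ = ∑ s, ∑ s', (∑ t, A s t * A s' t) ^ 2 :=
        (auxSumCongr2 fun s s' => by rw [sq, Finset.sum_mul_sum]).symm

end AuxMaster

section AuxTrace

variable {p m m' : ℕ} (Γa : Matrix (Fin p) (Fin m) ℝ) (Γb : Matrix (Fin p) (Fin m') ℝ)
    (W : Matrix (Fin p) (Fin p) ℝ)

lemma auxAT (hWt : Wᵀ = W) : (Γaᵀ * W * Γb)ᵀ = Γbᵀ * W * Γa := by
  rw [Matrix.transpose_mul, Matrix.transpose_mul, Matrix.transpose_transpose, hWt,
    ← Matrix.mul_assoc]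

lemma auxKey : W * (Γa * Γaᵀ) * W * (Γb * Γbᵀ) = (W * Γa) * ((Γaᵀ * W * Γb) * Γbᵀ) := by
  simp only [Matrix.mul_assoc]

lemma auxTrace1 (hWt : Wᵀ = W) :
    Matrix.trace (W * (Γa * Γaᵀ) * W * (Γb * Γbᵀ))
      = ∑ s, ∑ t, (Γaᵀ * W * Γb) s t ^ 2 := by
  rw [auxKey, Matrix.trace_mul_comm]
  rw [show ((Γaᵀ * W * Γb) * Γbᵀ) * (W * Γa) = (Γaᵀ * W * Γb) * (Γaᵀ * W * Γb)ᵀ by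
    rw [auxAT Γa Γb W hWt]; simp only [Matrix.mul_assoc]]
  simp only [Matrix.trace, Matrix.diag, Matrix.mul_apply, Matrix.transpose_apply]
  exact auxSumCongr2 fun s t => (sq _).symm

lemma auxTrace2 (hWt : Wᵀ = W) :
    Matrix.trace ((W * (Γa * Γaᵀ) * W * (Γb * Γbᵀ)) * (W * (Γa * Γaᵀ) * W * (Γb * Γbᵀ)))
      = ∑ s : Fin m, ∑ s' : Fin m, (∑ t, (Γaᵀ * W * Γb) s t * (Γaᵀ * W * Γb) s' t) ^ 2 := by
  rw [auxKey]
  rw [show ((W * Γa) * ((Γaᵀ * W * Γb) * Γbᵀ)) * ((W * Γa) * ((Γaᵀ * W * Γb) * Γbᵀ))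
      = (W * Γa) * (((Γaᵀ * W * Γb) * Γbᵀ) * ((W * Γa) * ((Γaᵀ * W * Γb) * Γbᵀ))) by
    simp only [Matrix.mul_assoc]]
  rw [Matrix.trace_mul_comm]
  rw [show (((Γaᵀ * W * Γb) * Γbᵀ) * ((W * Γa) * ((Γaᵀ * W * Γb) * Γbᵀ))) * (W * Γa)
      = ((Γaᵀ * W * Γb) * (Γaᵀ * W * Γb)ᵀ) * ((Γaᵀ * W * Γb) * (Γaᵀ * W * Γb)ᵀ) by
    rw [auxAT Γa Γb W hWt]; simp only [Matrix.mul_assoc]]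
  simp only [Matrix.trace, Matrix.diag, Matrix.mul_apply, Matrix.transpose_apply]
  refine auxSumCongr2 fun s s' => ?_
  rw [sq]
  congr 1
  exact Finset.sum_congr rfl fun t _ => mul_comm _ _

end AuxTrace

lemma auxDotId {p m m' : ℕ} (Γa : Matrix (Fin p) (Fin m) ℝ) (Γb : Matrix (Fin p) (Fin m') ℝ)
    (W : Matrix (Fin p) (Fin p) ℝ) (z : Fin m → ℝ) (z' : Fin m' → ℝ) :
    Γa.mulVec z ⬝ᵥ W.mulVec (Γb.mulVec z')
      = ∑ q : Fin m × Fin m', (Γaᵀ * W * Γb) q.1 q.2 * z q.1 * z' q.2 := by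
  rw [Matrix.mulVec_mulVec, Matrix.dotProduct_mulVec, ← Matrix.vecMul_transpose,
    Matrix.vecMul_vecMul, ← Matrix.mul_assoc]
  simp only [dotProduct, Matrix.vecMul, Fintype.sum_prod_type, Finset.sum_mul]
  exact Finset.sum_comm.trans (auxSumCongr2 fun s t => by ring)

lemma auxPow4Sum {ι : Type*} [Fintype ι] (f : ι → ℝ) :
    (∑ q, f q) ^ 4 = ∑ q1, ∑ q2, ∑ q3, ∑ q4, f q1 * f q2 * f q3 * f q4 := by
  rw [show ((∑ q, f q) ^ 4) = ((∑ q, f q) * (∑ q, f q)) * ((∑ q, f q) * (∑ q, f q)) by ring,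
    Finset.sum_mul_sum, Finset.sum_mul_sum]
  exact ((auxSumCongr2 fun i k => Finset.sum_mul_sum _ _ _ _).trans (auxCommd1 _)).trans
    (auxSumCongr4 fun a b c d => by ring)

lemma auxProd4Int {Ω : Type*} [MeasurableSpace Ω] (P : Measure Ω) [IsProbabilityMeasure P]
    {m : ℕ} (Z : Ω → Fin m → ℝ) (hL4 : ∀ s, MemLp (fun ω => Z ω s) 4 P)
    (s1 s2 s3 s4 : Fin m) :
    Integrable (fun ω => Z ω s1 * Z ω s2 * Z ω s3 * Z ω s4) P := by
  have hq : (1 : ℝ≥0∞) / 2 = 1 / 4 + 1 / 4 := by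
    simp only [one_div]
    rw [← ENNReal.add_halves 2⁻¹]
    norm_num [ENNReal.div_eq_inv_mul, ← ENNReal.mul_inv]
  have h2 : ∀ a b : Fin m, MemLp (fun ω => Z ω a * Z ω b) 2 P := fun a b =>
    (hL4 b).smul (hL4 a) (hpqr := ⟨by simpa only [one_div] using hq.symm⟩)
  have h1 : MemLp (fun ω => (Z ω s1 * Z ω s2) * (Z ω s3 * Z ω s4)) 1 P :=
    (h2 s3 s4).smul (h2 s1 s2)
  exact (memLp_one_iff_integrable.mp h1).congr
    (Filter.Eventually.of_forall fun ω => by ring)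

/-- **Lemma 2.3 (with `Δ ≥ 0`).** For independent factor-model vectors `X = Γ_α Z` and
`X' = Γ_β Z'` and a symmetric positive semidefinite `W`,
`E[(Xᵀ W X')⁴] ≤ (3+Δ)(tr(WΣ_α W Σ_β))² + (3+Δ)(2+Δ) tr((WΣ_α W Σ_β)²)`. -/
theorem stmt_12 {Ω : Type*} [MeasurableSpace Ω] (P : Measure Ω) [IsProbabilityMeasure P]
    (p m m' : ℕ) (Δ : ℝ) (hΔ : 0 ≤ Δ)
    (Z : Ω → Fin m → ℝ) (Z' : Ω → Fin m' → ℝ)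
    (hmeas : Measurable Z) (hmeas' : Measurable Z')
    (hZZ'indep : IndepFun Z Z' P)
    (hL4 : ∀ s, MemLp (fun ω => Z ω s) 4 P)
    (hmean : ∀ s, (∫ ω, Z ω s ∂P) = 0)
    (hvar : ∀ s, (∫ ω, (Z ω s) ^ 2 ∂P) = 1)
    (hkurt : ∀ s, (∫ ω, (Z ω s) ^ 4 ∂P) = 3 + Δ)
    (hfac : ∀ (r : ℕ) (s : Fin r → Fin m), Function.Injective s →
        ∀ ς : Fin r → ℕ, (∀ t, 1 ≤ ς t) → (∑ t, ς t) ≤ 4 →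
        (∫ ω, ∏ t, (Z ω (s t)) ^ (ς t) ∂P) = ∏ t, ∫ ω, (Z ω (s t)) ^ (ς t) ∂P)
    (hL4' : ∀ s, MemLp (fun ω => Z' ω s) 4 P)
    (hmean' : ∀ s, (∫ ω, Z' ω s ∂P) = 0)
    (hvar' : ∀ s, (∫ ω, (Z' ω s) ^ 2 ∂P) = 1)
    (hkurt' : ∀ s, (∫ ω, (Z' ω s) ^ 4 ∂P) = 3 + Δ)
    (hfac' : ∀ (r : ℕ) (s : Fin r → Fin m'), Function.Injective s →
        ∀ ς : Fin r → ℕ, (∀ t, 1 ≤ ς t) → (∑ t, ς t) ≤ 4 →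
        (∫ ω, ∏ t, (Z' ω (s t)) ^ (ς t) ∂P) = ∏ t, ∫ ω, (Z' ω (s t)) ^ (ς t) ∂P)
    (Γa : Matrix (Fin p) (Fin m) ℝ) (Γb : Matrix (Fin p) (Fin m') ℝ)
    (Sa Sb : Matrix (Fin p) (Fin p) ℝ) (hSa : Sa = Γa * Γaᵀ) (hSb : Sb = Γb * Γbᵀ)
    (W : Matrix (Fin p) (Fin p) ℝ) (hW : W.PosSemidef) :
    (∫ ω, (Γa.mulVec (Z ω) ⬝ᵥ W.mulVec (Γb.mulVec (Z' ω))) ^ 4 ∂P) ≤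
      (3 + Δ) * (Matrix.trace (W * Sa * W * Sb)) ^ 2 +
        (3 + Δ) * (2 + Δ) * Matrix.trace (W * Sa * W * Sb * (W * Sa * W * Sb)) := by
  have hWt : Wᵀ = W := (by simpa using hW.1 : W.IsSymm)
  set A : Matrix (Fin m) (Fin m') ℝ := Γaᵀ * W * Γb with hAdef
  -- measurability of coordinates
  have hZs : ∀ s, Measurable fun ω => Z ω s := fun s => (measurable_pi_apply s).comp hmeas
  have hZ's : ∀ t, Measurable fun ω => Z' ω t := fun t => (measurable_pi_apply t).comp hmeas'
  have hZ4meas : ∀ s1 s2 s3 s4 : Fin m,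
      Measurable fun ω => Z ω s1 * Z ω s2 * Z ω s3 * Z ω s4 :=
    fun s1 s2 s3 s4 => (((hZs s1).mul (hZs s2)).mul (hZs s3)).mul (hZs s4)
  have hZ'4meas : ∀ t1 t2 t3 t4 : Fin m',
      Measurable fun ω => Z' ω t1 * Z' ω t2 * Z' ω t3 * Z' ω t4 :=
    fun t1 t2 t3 t4 => (((hZ's t1).mul (hZ's t2)).mul (hZ's t3)).mul (hZ's t4)
  -- independence of the four-fold products
  have hIndep : ∀ (s1 s2 s3 s4 : Fin m) (t1 t2 t3 t4 : Fin m'),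
      IndepFun (fun ω => Z ω s1 * Z ω s2 * Z ω s3 * Z ω s4)
        (fun ω => Z' ω t1 * Z' ω t2 * Z' ω t3 * Z' ω t4) P := by
    intro s1 s2 s3 s4 t1 t2 t3 t4
    exact hZZ'indep.comp
      (φ := fun v : Fin m → ℝ => v s1 * v s2 * v s3 * v s4)
      (ψ := fun v : Fin m' → ℝ => v t1 * v t2 * v t3 * v t4)
      ((((measurable_pi_apply s1).mul (measurable_pi_apply s2)).mul
        (measurable_pi_apply s3)).mul (measurable_pi_apply s4))
      ((((measurable_pi_apply t1).mul (measurable_pi_apply t2)).mul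
        (measurable_pi_apply t3)).mul (measurable_pi_apply t4))
  -- integrability of each term
  have hTermInt : ∀ q1 q2 q3 q4 : Fin m × Fin m',
      Integrable (fun ω =>
        (A q1.1 q1.2 * Z ω q1.1 * Z' ω q1.2) * (A q2.1 q2.2 * Z ω q2.1 * Z' ω q2.2) *
        (A q3.1 q3.2 * Z ω q3.1 * Z' ω q3.2) * (A q4.1 q4.2 * Z ω q4.1 * Z' ω q4.2)) P := by
    intro q1 q2 q3 q4
    have h1 : Integrable (fun ω =>
        (Z ω q1.1 * Z ω q2.1 * Z ω q3.1 * Z ω q4.1) *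
        (Z' ω q1.2 * Z' ω q2.2 * Z' ω q3.2 * Z' ω q4.2)) P :=
      (hIndep q1.1 q2.1 q3.1 q4.1 q1.2 q2.2 q3.2 q4.2).integrable_mul
        (auxProd4Int P Z hL4 _ _ _ _) (auxProd4Int P Z' hL4' _ _ _ _)
    exact ((h1.const_mul (A q1.1 q1.2 * A q2.1 q2.2 * A q3.1 q3.2 * A q4.1 q4.2)).congr
      (Filter.Eventually.of_forall fun ω => by ring))
  -- value of each term
  have hTermVal : ∀ q1 q2 q3 q4 : Fin m × Fin m',
      (∫ ω, (A q1.1 q1.2 * Z ω q1.1 * Z' ω q1.2) * (A q2.1 q2.2 * Z ω q2.1 * Z' ω q2.2) *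
        (A q3.1 q3.2 * Z ω q3.1 * Z' ω q3.2) * (A q4.1 q4.2 * Z ω q4.1 * Z' ω q4.2) ∂P)
      = A q1.1 q1.2 * A q2.1 q2.2 * A q3.1 q3.2 * A q4.1 q4.2 *
        (((if q1.1 = q2.1 then (1:ℝ) else 0) * (if q3.1 = q4.1 then 1 else 0)
          + (if q1.1 = q3.1 then 1 else 0) * (if q2.1 = q4.1 then 1 else 0)
          + (if q1.1 = q4.1 then 1 else 0) * (if q2.1 = q3.1 then 1 else 0)
          + Δ * ((if q1.1 = q2.1 then 1 else 0) *
              ((if q1.1 = q3.1 then 1 else 0) * (if q1.1 = q4.1 then 1 else 0)))) *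
         ((if q1.2 = q2.2 then (1:ℝ) else 0) * (if q3.2 = q4.2 then 1 else 0)
          + (if q1.2 = q3.2 then 1 else 0) * (if q2.2 = q4.2 then 1 else 0)
          + (if q1.2 = q4.2 then 1 else 0) * (if q2.2 = q3.2 then 1 else 0)
          + Δ * ((if q1.2 = q2.2 then 1 else 0) *
              ((if q1.2 = q3.2 then 1 else 0) * (if q1.2 = q4.2 then 1 else 0))))) := by
    intro q1 q2 q3 q4
    calc (∫ ω, (A q1.1 q1.2 * Z ω q1.1 * Z' ω q1.2) * (A q2.1 q2.2 * Z ω q2.1 * Z' ω q2.2) *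
        (A q3.1 q3.2 * Z ω q3.1 * Z' ω q3.2) * (A q4.1 q4.2 * Z ω q4.1 * Z' ω q4.2) ∂P)
        = ∫ ω, (A q1.1 q1.2 * A q2.1 q2.2 * A q3.1 q3.2 * A q4.1 q4.2) *
            ((Z ω q1.1 * Z ω q2.1 * Z ω q3.1 * Z ω q4.1) *
             (Z' ω q1.2 * Z' ω q2.2 * Z' ω q3.2 * Z' ω q4.2)) ∂P := by
          congr 1; funext ω; ring
      _ = (A q1.1 q1.2 * A q2.1 q2.2 * A q3.1 q3.2 * A q4.1 q4.2) *
            ∫ ω, (Z ω q1.1 * Z ω q2.1 * Z ω q3.1 * Z ω q4.1) *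
             (Z' ω q1.2 * Z' ω q2.2 * Z' ω q3.2 * Z' ω q4.2) ∂P := by
          rw [MeasureTheory.integral_const_mul]
      _ = (A q1.1 q1.2 * A q2.1 q2.2 * A q3.1 q3.2 * A q4.1 q4.2) *
            ((∫ ω, Z ω q1.1 * Z ω q2.1 * Z ω q3.1 * Z ω q4.1 ∂P) *
             (∫ ω, Z' ω q1.2 * Z' ω q2.2 * Z' ω q3.2 * Z' ω q4.2 ∂P)) := by
          rw [(hIndep q1.1 q2.1 q3.1 q4.1 q1.2 q2.2 q3.2 q4.2).integral_fun_mul_eq_mul_integral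
            (hZ4meas _ _ _ _).aestronglyMeasurable (hZ'4meas _ _ _ _).aestronglyMeasurable]
      _ = _ := by
          rw [auxMoment4 P Δ Z hmean hvar hkurt hfac q1.1 q2.1 q3.1 q4.1,
            auxMoment4 P Δ Z' hmean' hvar' hkurt' hfac' q1.2 q2.2 q3.2 q4.2]
  -- main computation
  have hKey : (∫ ω, (Γa.mulVec (Z ω) ⬝ᵥ W.mulVec (Γb.mulVec (Z' ω))) ^ 4 ∂P)
      = 3 * (∑ s, ∑ t, A s t ^ 2) ^ 2
        + 6 * (∑ s, ∑ s', (∑ t, A s t * A s' t) ^ 2)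
        + 3 * Δ * (∑ s, (∑ t, A s t ^ 2) ^ 2)
        + 3 * Δ * (∑ t, (∑ s, A s t ^ 2) ^ 2)
        + Δ * Δ * (∑ s, ∑ t, A s t ^ 4) := by
    calc (∫ ω, (Γa.mulVec (Z ω) ⬝ᵥ W.mulVec (Γb.mulVec (Z' ω))) ^ 4 ∂P)
        = ∫ ω, ∑ q1 : Fin m × Fin m', ∑ q2 : Fin m × Fin m', ∑ q3 : Fin m × Fin m',
            ∑ q4 : Fin m × Fin m',
            (A q1.1 q1.2 * Z ω q1.1 * Z' ω q1.2) * (A q2.1 q2.2 * Z ω q2.1 * Z' ω q2.2) *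
            (A q3.1 q3.2 * Z ω q3.1 * Z' ω q3.2) * (A q4.1 q4.2 * Z ω q4.1 * Z' ω q4.2) ∂P := by
          congr 1; funext ω
          rw [auxDotId Γa Γb W (Z ω) (Z' ω), auxPow4Sum]
      _ = ∑ q1 : Fin m × Fin m', ∑ q2 : Fin m × Fin m', ∑ q3 : Fin m × Fin m',
            ∑ q4 : Fin m × Fin m',
            ∫ ω, (A q1.1 q1.2 * Z ω q1.1 * Z' ω q1.2) * (A q2.1 q2.2 * Z ω q2.1 * Z' ω q2.2) *
            (A q3.1 q3.2 * Z ω q3.1 * Z' ω q3.2) * (A q4.1 q4.2 * Z ω q4.1 * Z' ω q4.2) ∂P := by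
          rw [MeasureTheory.integral_finset_sum _ (fun q1 _ =>
            integrable_finset_sum _ (fun q2 _ => integrable_finset_sum _ (fun q3 _ =>
              integrable_finset_sum _ (fun q4 _ => hTermInt q1 q2 q3 q4))))]
          refine Finset.sum_congr rfl fun q1 _ => ?_
          rw [MeasureTheory.integral_finset_sum _ (fun q2 _ =>
            integrable_finset_sum _ (fun q3 _ =>
              integrable_finset_sum _ (fun q4 _ => hTermInt q1 q2 q3 q4)))]
          refine Finset.sum_congr rfl fun q2 _ => ?_
          rw [MeasureTheory.integral_finset_sum _ (fun q3 _ =>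
              integrable_finset_sum _ (fun q4 _ => hTermInt q1 q2 q3 q4))]
          refine Finset.sum_congr rfl fun q3 _ => ?_
          exact MeasureTheory.integral_finset_sum _ (fun q4 _ => hTermInt q1 q2 q3 q4)
      _ = ∑ q1 : Fin m × Fin m', ∑ q2 : Fin m × Fin m', ∑ q3 : Fin m × Fin m',
            ∑ q4 : Fin m × Fin m',
            (A q1.1 q1.2 * A q2.1 q2.2 * A q3.1 q3.2 * A q4.1 q4.2 *
            (((if q1.1 = q2.1 then (1:ℝ) else 0) * (if q3.1 = q4.1 then 1 else 0)
              + (if q1.1 = q3.1 then 1 else 0) * (if q2.1 = q4.1 then 1 else 0)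
              + (if q1.1 = q4.1 then 1 else 0) * (if q2.1 = q3.1 then 1 else 0)
              + Δ * ((if q1.1 = q2.1 then 1 else 0) *
                  ((if q1.1 = q3.1 then 1 else 0) * (if q1.1 = q4.1 then 1 else 0)))) *
             ((if q1.2 = q2.2 then (1:ℝ) else 0) * (if q3.2 = q4.2 then 1 else 0)
              + (if q1.2 = q3.2 then 1 else 0) * (if q2.2 = q4.2 then 1 else 0)
              + (if q1.2 = q4.2 then 1 else 0) * (if q2.2 = q3.2 then 1 else 0)
              + Δ * ((if q1.2 = q2.2 then 1 else 0) *
                  ((if q1.2 = q3.2 then 1 else 0) * (if q1.2 = q4.2 then 1 else 0)))))) :=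
          auxSumCongr4 fun q1 q2 q3 q4 => hTermVal q1 q2 q3 q4
      _ = _ := by
          simp only [Fintype.sum_prod_type]
          exact auxMasterSum Δ A
  rw [hKey, hSa, hSb, auxTrace1 Γa Γb W hWt, auxTrace2 Γa Γb W hWt]
  rw [← hAdef]
  have h1 := auxE4_le_T2 A
  have h2 := auxDn_le_E4 A
  have h3 := auxDm_le_E4 A
  have h4 := (auxF4_le_Dn A).trans (auxDn_le_E4 A)
  nlinarith [mul_nonneg hΔ (sub_nonneg.mpr h1), mul_nonneg hΔ (sub_nonneg.mpr h2),
    mul_nonneg hΔ (sub_nonneg.mpr h3), mul_nonneg (mul_nonneg hΔ hΔ) (sub_nonneg.mpr h4)]
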